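/- Let G be a finite simple graph on at least 4 vertices which does not have balanced components. Suppose G has a vertex v such that G - v has balanced components and deg(v) ≥ |V(G)|/2 - 1. Let A, B ⊆ V(G) with |A| ≥ (|V(G)| - 1)/2, |B| ≥ (|V(G)| - 1)/2, and v ∈ A. Then there is a path P in G starting at a vertex of A and ending at a vertex of B such that either P covers all vertices of G, or the maximum degree of the induced subgraph of G on V(G)\V(P) is at most (|V(G)\V(P)| - 1)/2. -/
import Mathlib


/-- `BalancedOn G S` : the induced subgraph of `G` on `S` has balanced components,
i.e. `S` can be partitioned into sets `X` and `Y` with no edges between them such that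
`|X| = ⌊|S|/2⌋` and `|Y| = ⌈|S|/2⌉`. -/
def BalancedOn {V : Type*} (G : SimpleGraph V) (S : Set V) : Prop :=
  ∃ X Y : Set V, X ∪ Y = S ∧ Disjoint X Y ∧
    (∀ x ∈ X, ∀ y ∈ Y, ¬ G.Adj x y) ∧
    X.ncard = S.ncard / 2 ∧ Y.ncard = (S.ncard + 1) / 2

open SimpleGraph Set in
private lemma side_bound {V : Type*} [Fintype V] (G : SimpleGraph V) (v : V)
    (P : Set V) (S : Set V) (hvS : v ∈ S)
    (hPadj : ∀ p ∈ P, ∀ u, G.Adj p u → u = v ∨ u ∈ P)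
    (M : ℕ)
    (HP : 2 * (P \ S).ncard ≤ M + 1 ∨
      ((∀ h ∈ P, (∃ x ∈ P, x ≠ h) → ∃ x ∈ P, x ≠ h ∧ ¬G.Adj h x) ∧ 2 * P.ncard ≤ M + 3))
    (hM : (P \ S).ncard ≤ M)
    (w : V) (hwP : w ∈ P) (hwS : w ∉ S) :
    2 * {u | u ∉ S ∧ G.Adj w u}.ncard + 1 ≤ M := by
  classical
  have hwPS : w ∈ P \ S := ⟨hwP, hwS⟩
  have h1 : 1 ≤ (P \ S).ncard := by
    have : 0 < (P \ S).ncard := (Set.ncard_pos (Set.toFinite _)).2 ⟨w, hwPS⟩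
    omega
  have hsub : {u | u ∉ S ∧ G.Adj w u} ⊆ (P \ S) \ {w} := by
    rintro u ⟨huS, hadj⟩
    rcases hPadj w hwP u hadj with h | h
    · exact absurd (h ▸ hvS) huS
    · refine ⟨⟨h, huS⟩, ?_⟩
      intro he
      rw [Set.mem_singleton_iff] at he
      exact (G.ne_of_adj hadj) he.symm
  rcases HP with hc | ⟨hnh, ha⟩
  · have hle : {u | u ∉ S ∧ G.Adj w u}.ncard ≤ (P \ S).ncard - 1 := by
      have h2 := Set.ncard_le_ncard hsub (Set.toFinite _)
      rwa [Set.ncard_diff_singleton_of_mem hwPS] at h2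
    omega
  · by_cases hex : ∃ x ∈ P, x ≠ w
    · obtain ⟨x0, hx0P, hx0w, hnadj⟩ := hnh w hwP hex
      have hwx0 : ({w, x0} : Set V) ⊆ P := by
        rintro u (rfl | rfl)
        · exact hwP
        · exact hx0P
      have hsub2 : {u | u ∉ S ∧ G.Adj w u} ⊆ P \ {w, x0} := by
        rintro u ⟨huS, hadj⟩
        obtain ⟨⟨huP, _⟩, hne⟩ := hsub ⟨huS, hadj⟩
        refine ⟨huP, ?_⟩
        rintro (rfl | rfl)
        · exact hne rfl
        · exact hnadj hadj
      have hP2 : 2 ≤ P.ncard := by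
        have h3 := Set.ncard_le_ncard hwx0 (Set.toFinite _)
        rwa [Set.ncard_pair (Ne.symm hx0w)] at h3
      have hle : {u | u ∉ S ∧ G.Adj w u}.ncard ≤ P.ncard - 2 := by
        have h2 := Set.ncard_le_ncard hsub2 (Set.toFinite _)
        rwa [Set.ncard_diff hwx0, Set.ncard_pair (Ne.symm hx0w)] at h2
      omega
    · push_neg at hex
      have hempty : {u | u ∉ S ∧ G.Adj w u} = ∅ := by
        ext u
        simp only [Set.mem_setOf_eq, Set.mem_empty_iff_false, iff_false, not_and]
        intro huS hadj
        obtain ⟨⟨huP, _⟩, hne⟩ := hsub ⟨huS, hadj⟩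
        exact hne (by simp [hex u huP])
      rw [hempty, Set.ncard_empty]
      omega

private lemma path_cond {V : Type*} [Fintype V] (G : SimpleGraph V) (v : V) (X Y : Set V)
    (hdXY : Disjoint X Y)
    (hadjXY : ∀ x ∈ X, ∀ y ∈ Y, ¬ G.Adj x y)
    (hun : X ∪ Y = ({v}ᶜ : Set V))
    (S : Set V) (hvS : v ∈ S)
    (HX : 2 * (X \ S).ncard ≤ (X \ S).ncard + (Y \ S).ncard + 1 ∨
      ((∀ h ∈ X, (∃ x ∈ X, x ≠ h) → ∃ x ∈ X, x ≠ h ∧ ¬G.Adj h x) ∧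
        2 * X.ncard ≤ (X \ S).ncard + (Y \ S).ncard + 3))
    (HY : 2 * (Y \ S).ncard ≤ (X \ S).ncard + (Y \ S).ncard + 1 ∨
      ((∀ h ∈ Y, (∃ x ∈ Y, x ≠ h) → ∃ x ∈ Y, x ≠ h ∧ ¬G.Adj h x) ∧
        2 * Y.ncard ≤ (X \ S).ncard + (Y \ S).ncard + 3)) :
    ∀ w, w ∉ S → 2 * {u | u ∉ S ∧ G.Adj w u}.ncard + 1 ≤ {u | u ∉ S}.ncard := by
  classical
  have hXadj : ∀ p ∈ X, ∀ u, G.Adj p u → u = v ∨ u ∈ X := by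
    intro p hp u hadj
    by_cases h : u = v
    · exact Or.inl h
    · right
      have hu : u ∈ X ∪ Y := by
        rw [hun]
        simp [h]
      rcases hu with hu | hu
      · exact hu
      · exact absurd hadj (hadjXY p hp u hu)
  have hYadj : ∀ p ∈ Y, ∀ u, G.Adj p u → u = v ∨ u ∈ Y := by
    intro p hp u hadj
    by_cases h : u = v
    · exact Or.inl h
    · right
      have hu : u ∈ X ∪ Y := by
        rw [hun]
        simp [h]
      rcases hu with hu | hu
      · exact absurd hadj.symm (hadjXY u hu p hp)
      · exact hu
  have hUn : {u | u ∉ S} = (X \ S) ∪ (Y \ S) := by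
    ext u
    simp only [Set.mem_setOf_eq, Set.mem_union, Set.mem_diff]
    constructor
    · intro hu
      have huv : u ≠ v := fun h => hu (h ▸ hvS)
      have : u ∈ X ∪ Y := by
        rw [hun]; simp [huv]
      rcases this with h | h
      · exact Or.inl ⟨h, hu⟩
      · exact Or.inr ⟨h, hu⟩
    · rintro (⟨_, h⟩ | ⟨_, h⟩) <;> exact h
  have hM : {u | u ∉ S}.ncard = (X \ S).ncard + (Y \ S).ncard := by
    rw [hUn]
    exact Set.ncard_union_eq (hdXY.mono Set.diff_subset Set.diff_subset)
      (Set.toFinite _) (Set.toFinite _)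
  intro w hw
  rw [hM]
  have hwv : w ≠ v := fun h => hw (h ▸ hvS)
  have hwXY : w ∈ X ∪ Y := by rw [hun]; simp [hwv]
  rcases hwXY with hwX | hwY
  · exact side_bound G v X S hvS hXadj _ HX (Nat.le_add_right _ _) w hwX hw
  · exact side_bound G v Y S hvS hYadj _ HY (Nat.le_add_left _ _) w hwY hw

open SimpleGraph Set in
/-- Let `G` be a graph on at least `4` vertices without balanced components, with a
vertex `v` such that `G - v` has balanced components and `deg(v) ≥ |V(G)|/2 - 1`
(expressed as `|V(G)| ≤ 2·deg(v) + 2`). Let `A`, `B` be vertex sets with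
`|A|, |B| ≥ (|V(G)| - 1)/2` and `v ∈ A`. Then there is a path from `A` to `B` such that
either it covers all vertices, or `Δ(G \ P) ≤ (|G \ P| - 1)/2`. -/
theorem statement7 {V : Type*} [Fintype V] (G : SimpleGraph V)
    (hcard : 4 ≤ Fintype.card V)
    (hbal : ¬ BalancedOn G Set.univ)
    (v : V)
    (hbalv : BalancedOn G ({v}ᶜ))
    (hdeg : Fintype.card V ≤ 2 * {u | G.Adj v u}.ncard + 2)
    (A B : Set V)
    (hA : Fintype.card V ≤ 2 * A.ncard + 1)
    (hB : Fintype.card V ≤ 2 * B.ncard + 1)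
    (hvA : v ∈ A) :
    ∃ a ∈ A, ∃ b ∈ B, ∃ p : G.Walk a b, p.IsPath ∧
      ((∀ x, x ∈ p.support) ∨
        ∀ w, w ∉ p.support →
          2 * {u | u ∉ p.support ∧ G.Adj w u}.ncard + 1 ≤ {u | u ∉ p.support}.ncard) := by

  classical
  obtain ⟨X, Y, hun, hdXY, hadjXY, hXc, hYc⟩ := hbalv
  set n := Fintype.card V with hn_def
  set N := {u : V | G.Adj v u} with hN_def
  -- cardinality of the complement of v
  have hcv : ({v}ᶜ : Set V).ncard = n - 1 := by
    have h2 : ({v} : Set V).ncard + ({v}ᶜ : Set V).ncard = n := by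
      rw [Set.ncard_add_ncard_compl, Nat.card_eq_fintype_card]
    rw [Set.ncard_singleton] at h2
    omega
  rw [hcv] at hXc hYc
  have hXYcard : X.ncard + Y.ncard = n - 1 := by
    have h1 := Set.ncard_union_eq hdXY (Set.toFinite _) (Set.toFinite _)
    rw [hun, hcv] at h1
    omega
  -- memberships
  have hvX : v ∉ X := by
    intro h
    have : v ∈ X ∪ Y := Or.inl h
    rw [hun] at this
    exact this rfl
  have hvY : v ∉ Y := by
    intro h
    have : v ∈ X ∪ Y := Or.inr h
    rw [hun] at this
    exact this rfl
  have hXY' : ∀ {u : V}, u ∈ X → u ∉ Y := fun hu => Set.disjoint_left.1 hdXY hu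
  have hmemV : ∀ u : V, u ≠ v → u ∈ X ∨ u ∈ Y := by
    intro u h
    have : u ∈ X ∪ Y := by rw [hun]; simp [h]
    exact this
  -- side closures
  have hXcl : ∀ p ∈ X, ∀ u, G.Adj p u → u = v ∨ u ∈ X := by
    intro p hp u hadj
    by_cases h : u = v
    · exact Or.inl h
    · rcases hmemV u h with h' | h'
      · exact Or.inr h'
      · exact absurd hadj (hadjXY p hp u h')
  have hYcl : ∀ p ∈ Y, ∀ u, G.Adj p u → u = v ∨ u ∈ Y := by
    intro p hp u hadj
    by_cases h : u = v
    · exact Or.inl h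
    · rcases hmemV u h with h' | h'
      · exact absurd hadj.symm (hadjXY u h' p hp)
      · exact Or.inr h'
  -- neighbourhood of v
  have hvN : v ∉ N := by
    intro h
    exact G.irrefl h
  have hNXY : ∀ {u : V}, u ∈ N → u ∈ X ∨ u ∈ Y := by
    intro u hu
    refine hmemV u ?_
    intro e
    rw [e] at hu
    exact hvN hu
  have hsplit : N.ncard = (X ∩ N).ncard + (Y ∩ N).ncard := by
    have heq : N = (X ∩ N) ∪ (Y ∩ N) := by
      ext u
      simp only [Set.mem_union, Set.mem_inter_iff]
      constructor
      · intro hu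
        rcases hNXY hu with h | h
        · exact Or.inl ⟨h, hu⟩
        · exact Or.inr ⟨h, hu⟩
      · rintro (⟨_, h⟩ | ⟨_, h⟩) <;> exact h
    have hd2 : Disjoint (X ∩ N) (Y ∩ N) :=
      hdXY.mono Set.inter_subset_left Set.inter_subset_left
    have h2 := Set.ncard_union_eq hd2 (Set.toFinite _) (Set.toFinite _)
    rw [← heq] at h2
    exact h2
  have hAt : Y.ncard ≤ A.ncard := by omega
  have hBt : Y.ncard ≤ B.ncard := by omega
  -- contradiction builder
  have hunivn : (Set.univ : Set V).ncard = n := by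
    rw [Set.ncard_univ, Nat.card_eq_fintype_card]
  have mkContra : ∀ U : Set V, (∀ p ∈ U, ∀ q, G.Adj p q → q ∈ U) →
      U.ncard = (n + 1) / 2 → False := by
    intro U hcl hUc
    have hsum : U.ncard + Uᶜ.ncard = n := by
      rw [Set.ncard_add_ncard_compl, Nat.card_eq_fintype_card]
    refine hbal ⟨Uᶜ, U, by rw [Set.compl_union_self], disjoint_compl_left, ?_, ?_, ?_⟩
    · intro x hx y hy hadj
      exact hx (hcl y hy x hadj.symm)
    · rw [hunivn]; omega
    · rw [hunivn]; omega
  -- F1 : v has a neighbour in Y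
  have hNyNE : (Y ∩ N).Nonempty := by
    by_contra hno
    rw [Set.not_nonempty_iff_eq_empty] at hno
    apply mkContra (insert v X)
    · intro p hp q hadj
      simp only [Set.mem_insert_iff] at hp ⊢
      rcases hp with rfl | hpX
      · rcases hNXY (show q ∈ N from hadj) with h | h
        · exact Or.inr h
        · exact absurd (⟨h, hadj⟩ : q ∈ Y ∩ N) (Set.eq_empty_iff_forall_notMem.mp hno q)
      · exact hXcl p hpX q hadj
    · rw [Set.ncard_insert_of_notMem hvX]; omega
  -- F2 : if n is odd, v has a neighbour in X
  have hNxNE : Y.ncard = X.ncard → (X ∩ N).Nonempty := by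
    intro hts
    by_contra hno
    rw [Set.not_nonempty_iff_eq_empty] at hno
    apply mkContra (insert v Y)
    · intro p hp q hadj
      simp only [Set.mem_insert_iff] at hp ⊢
      rcases hp with rfl | hpY
      · rcases hNXY (show q ∈ N from hadj) with h | h
        · exact absurd (⟨h, hadj⟩ : q ∈ X ∩ N) (Set.eq_empty_iff_forall_notMem.mp hno q)
        · exact Or.inr h
      · exact hYcl p hpY q hadj
    · rw [Set.ncard_insert_of_notMem hvY]; omega
  -- diff card helpers
  have XDIFF : ∀ (S F : Set V), F ⊆ X → (∀ u ∈ X, (u ∈ S ↔ u ∈ F)) →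
      (X \ S).ncard = X.ncard - F.ncard ∧ F.ncard ≤ X.ncard := by
    intro S F hFX hiff
    have he : X \ S = X \ F := by
      ext u
      simp only [Set.mem_diff]
      exact ⟨fun ⟨h1, h2⟩ => ⟨h1, fun hf => h2 ((hiff u h1).2 hf)⟩,
             fun ⟨h1, h2⟩ => ⟨h1, fun hs => h2 ((hiff u h1).1 hs)⟩⟩
    exact ⟨by rw [he, Set.ncard_diff hFX], Set.ncard_le_ncard hFX (Set.toFinite _)⟩
  have YDIFF : ∀ (S F : Set V), F ⊆ Y → (∀ u ∈ Y, (u ∈ S ↔ u ∈ F)) →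
      (Y \ S).ncard = Y.ncard - F.ncard ∧ F.ncard ≤ Y.ncard := by
    intro S F hFY hiff
    have he : Y \ S = Y \ F := by
      ext u
      simp only [Set.mem_diff]
      exact ⟨fun ⟨h1, h2⟩ => ⟨h1, fun hf => h2 ((hiff u h1).2 hf)⟩,
             fun ⟨h1, h2⟩ => ⟨h1, fun hs => h2 ((hiff u h1).1 hs)⟩⟩
    exact ⟨by rw [he, Set.ncard_diff hFY], Set.ncard_le_ncard hFY (Set.toFinite _)⟩
  have NC3 : ∀ a b c : V, a ≠ b → a ≠ c → b ≠ c → ({a, b, c} : Set V).ncard = 3 := by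
    intro a b c h1 h2 h3
    rw [Set.ncard_insert_of_notMem (by simp [h1, h2]), Set.ncard_pair h3]
  -- the leaf finisher
  have LEAF : ∀ (a b : V) (p : G.Walk a b) (S : Set V), p.IsPath → a ∈ A → b ∈ B →
      (∀ u, u ∈ p.support ↔ u ∈ S) → v ∈ S →
      (2 * (X \ S).ncard ≤ (X \ S).ncard + (Y \ S).ncard + 1 ∨
        ((∀ h ∈ X, (∃ x ∈ X, x ≠ h) → ∃ x ∈ X, x ≠ h ∧ ¬G.Adj h x) ∧
          2 * X.ncard ≤ (X \ S).ncard + (Y \ S).ncard + 3)) →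
      (2 * (Y \ S).ncard ≤ (X \ S).ncard + (Y \ S).ncard + 1 ∨
        ((∀ h ∈ Y, (∃ x ∈ Y, x ≠ h) → ∃ x ∈ Y, x ≠ h ∧ ¬G.Adj h x) ∧
          2 * Y.ncard ≤ (X \ S).ncard + (Y \ S).ncard + 3)) →
      ∃ a ∈ A, ∃ b ∈ B, ∃ p : G.Walk a b, p.IsPath ∧
        ((∀ x, x ∈ p.support) ∨
          ∀ w, w ∉ p.support →
            2 * {u | u ∉ p.support ∧ G.Adj w u}.ncard + 1 ≤ {u | u ∉ p.support}.ncard) := by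
    intro a b p S hp haA hbB hiff hvS HX HY
    refine ⟨a, haA, b, hbB, p, hp, Or.inr fun w hw => ?_⟩
    have hw' : w ∉ S := fun h => hw ((hiff w).2 h)
    have e1 : {u | u ∉ p.support} = {u | u ∉ S} := by
      ext u
      simp only [Set.mem_setOf_eq]
      exact not_congr (hiff u)
    have e2 : {u | u ∉ p.support ∧ G.Adj w u} = {u | u ∉ S ∧ G.Adj w u} := by
      ext u
      simp only [Set.mem_setOf_eq]
      exact and_congr_left' (not_congr (hiff u))
    rw [e1, e2]
    exact path_cond G v X Y hdXY hadjXY hun S hvS HX HY w hw'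
  -- rigidity
  have RIG : v ∉ B → (∀ b ∈ B, b ∉ N) → B = (X ∪ Y) \ N ∧ N.ncard = X.ncard := by
    intro hvB hBN
    have hsub : B ⊆ (X ∪ Y) \ N := by
      intro b hb
      exact ⟨hmemV b (fun e => hvB (e ▸ hb)), hBN b hb⟩
    have hNsub : N ⊆ X ∪ Y := fun u hu => hNXY hu
    have hXYn : (X ∪ Y).ncard = n - 1 := by rw [hun, hcv]
    have hDcard : ((X ∪ Y) \ N).ncard = (n - 1) - N.ncard := by
      rw [Set.ncard_diff hNsub, hXYn]
    have hBle := Set.ncard_le_ncard hsub (Set.toFinite _)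
    rw [hDcard] at hBle
    constructor
    · exact Set.eq_of_subset_of_ncard_le hsub (by omega) (Set.toFinite _)
    · omega
  -- ================= CASE 1 : v ∈ B =================
  by_cases hvB : v ∈ B
  · have hx := XDIFF {v} ∅ (Set.empty_subset X) (by
      intro u hu
      simp only [Set.mem_singleton_iff, Set.mem_empty_iff_false, iff_false]
      rintro rfl
      exact hvX hu)
    have hy := YDIFF {v} ∅ (Set.empty_subset Y) (by
      intro u hu
      simp only [Set.mem_singleton_iff, Set.mem_empty_iff_false, iff_false]
      rintro rfl
      exact hvY hu)
    refine LEAF v v Walk.nil {v} ?_ hvA hvB ?_ rfl ?_ ?_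
    · exact Walk.IsPath.nil
    · intro u; simp [Walk.support_nil]
    · left; rw [hx.1, hy.1, Set.ncard_empty]; omega
    · left; rw [hx.1, hy.1, Set.ncard_empty]; omega
  -- ================= CASE 2 : some b ∈ B ∩ Y adjacent to v =================
  by_cases h2 : ∃ b, b ∈ B ∧ b ∈ Y ∧ G.Adj v b
  · obtain ⟨b, hbB, hbY, hab⟩ := h2
    have hnvb : v ≠ b := fun e => hvY (e ▸ hbY)
    have hx := XDIFF {v, b} ∅ (Set.empty_subset X) (by
      intro u hu
      simp only [Set.mem_insert_iff, Set.mem_singleton_iff, Set.mem_empty_iff_false, iff_false]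
      rintro (rfl | rfl)
      · exact hvX hu
      · exact hXY' hu hbY)
    have hy := YDIFF {v, b} {b}
      (by intro u hu; rw [Set.mem_singleton_iff] at hu; rw [hu]; exact hbY)
      (by
        intro u hu
        simp only [Set.mem_insert_iff, Set.mem_singleton_iff]
        constructor
        · rintro (rfl | rfl)
          · exact absurd hu hvY
          · rfl
        · rintro rfl; right; rfl)
    refine LEAF v b (Walk.cons hab Walk.nil) {v, b} ?_ hvA hbB ?_ (by simp) ?_ ?_
    · rw [Walk.isPath_def]
      simp [hnvb]
    · intro u; simp [Walk.support_cons]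
    · left; rw [hx.1, hy.1, Set.ncard_empty, Set.ncard_singleton]; omega
    · left; rw [hx.1, hy.1, Set.ncard_empty, Set.ncard_singleton]; omega
  -- ================= CASE 3 : some b ∈ B ∩ Y at distance 2 =================
  by_cases h3 : ∃ y, y ∈ Y ∧ y ∈ N ∧ ∃ b, b ∈ B ∧ b ∈ Y ∧ G.Adj y b
  · obtain ⟨y2, hy2Y, hy2N, b2, hb2B, hb2Y, hy2b2⟩ := h3
    have hb2N : b2 ∉ N := fun h => h2 ⟨b2, hb2B, hb2Y, h⟩
    have hny2b2 : y2 ≠ b2 := ne_of_mem_of_not_mem hy2N hb2N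
    have hvy2 : G.Adj v y2 := hy2N
    have hnvy2 : v ≠ y2 := fun e => hvY (e ▸ hy2Y)
    have hnvb2 : v ≠ b2 := fun e => hvY (e ▸ hb2Y)
    by_cases NHXe : (∀ h ∈ X, (∃ x ∈ X, x ≠ h) → ∃ x ∈ X, x ≠ h ∧ ¬G.Adj h x) ∨
        Y.ncard = X.ncard + 1
    · -- Leaves L3 / L3' : path [v, y2, b2]
      obtain ⟨hx1', hx2'⟩ := XDIFF {v, y2, b2} ∅ (Set.empty_subset X) (by
        intro u hu
        simp only [Set.mem_insert_iff, Set.mem_singleton_iff, Set.mem_empty_iff_false, iff_false]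
        rintro (rfl | rfl | rfl)
        · exact hvX hu
        · exact hXY' hu hy2Y
        · exact hXY' hu hb2Y)
      obtain ⟨hy1', hy2''⟩ := YDIFF {v, y2, b2} {y2, b2}
        (by rintro u (rfl | rfl); exacts [hy2Y, hb2Y])
        (by
          intro u hu
          simp only [Set.mem_insert_iff, Set.mem_singleton_iff]
          constructor
          · rintro (rfl | hh)
            · exact absurd hu hvY
            · exact hh
          · intro hh; right; exact hh)
      rw [Set.ncard_empty] at hx1'
      rw [Set.ncard_pair hny2b2] at hy1' hy2''
      refine LEAF v b2 (Walk.cons hvy2 (Walk.cons hy2b2 Walk.nil)) {v, y2, b2} ?_ hvA hb2B ?_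
        (by simp) ?_ ?_
      · rw [Walk.isPath_def]; simp [hnvy2, hnvb2, hny2b2]
      · intro u; simp [Walk.support_cons]
      · rcases NHXe with hno | hts
        · exact Or.inr ⟨hno, by rw [hx1', hy1']; omega⟩
        · left; rw [hx1', hy1']; omega
      · left; rw [hx1', hy1']; omega
    · push_neg at NHXe
      obtain ⟨⟨xh, hhX, hhex, hful⟩, htsne⟩ := NHXe
      have hts : Y.ncard = X.ncard := by omega
      by_cases h4' : ∃ b, b ∈ B ∧ b ∈ X ∧ G.Adj v b
      · -- Leaf L4 : [v, b1]  (n odd)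
        obtain ⟨b1, hb1B, hb1X, hvb1⟩ := h4'
        have hnvb1 : v ≠ b1 := fun e => hvX (e ▸ hb1X)
        obtain ⟨hx1', hx2'⟩ := XDIFF {v, b1} {b1}
          (by rintro u rfl; exact hb1X)
          (by
            intro u hu
            simp only [Set.mem_insert_iff, Set.mem_singleton_iff]
            constructor
            · rintro (rfl | hh)
              · exact absurd hu hvX
              · exact hh
            · intro hh; right; exact hh)
        obtain ⟨hy1', hy2''⟩ := YDIFF {v, b1} ∅ (Set.empty_subset Y) (by
          intro u hu
          simp only [Set.mem_insert_iff, Set.mem_singleton_iff, Set.mem_empty_iff_false, iff_false]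
          rintro (rfl | rfl)
          · exact hvY hu
          · exact hXY' hb1X hu)
        rw [Set.ncard_singleton] at hx1' hx2'
        rw [Set.ncard_empty] at hy1'
        refine LEAF v b1 (Walk.cons hvb1 Walk.nil) {v, b1} ?_ hvA hb1B ?_ (by simp) ?_ ?_
        · rw [Walk.isPath_def]; simp [hnvb1]
        · intro u; simp [Walk.support_cons]
        · left; rw [hx1', hy1']; omega
        · left; rw [hx1', hy1']; omega
      · -- rigid situation
        have hBN : ∀ b ∈ B, b ∉ N := by
          intro b hb hbN
          rcases hNXY hbN with hX' | hY'
          · exact h4' ⟨b, hb, hX', hbN⟩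
          · exact h2 ⟨b, hb, hY', hbN⟩
        obtain ⟨hBeq, hds⟩ := RIG hvB hBN
        have hXB : ∀ {x : V}, x ∈ X → x ∉ N → x ∈ B := by
          intro x hx hn
          rw [hBeq]; exact ⟨Or.inl hx, hn⟩
        obtain ⟨x1, hx1X, hx1N⟩ := hNxNE hts
        have hny1 : 1 ≤ (Y ∩ N).ncard := by
          have := (Set.ncard_pos (Set.toFinite _)).2 hNyNE
          omega
        have hBxNE : ∃ x, x ∈ X ∧ x ∉ N := by
          have hxn : (X \ N).ncard = X.ncard - (X ∩ N).ncard := by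
            rw [← Set.diff_self_inter, Set.ncard_diff Set.inter_subset_left]
          have hpos : 0 < (X \ N).ncard := by omega
          obtain ⟨x, hx⟩ := (Set.ncard_pos (Set.toFinite _)).1 hpos
          exact ⟨x, hx.1, hx.2⟩
        by_cases hA1 : ∃ a, a ∈ A ∧ a ∈ X ∧ a ∈ N
        · -- Leaf L10 : [a, v, y2, b2]
          obtain ⟨a, haA, haX, haN⟩ := hA1
          have hnav : a ≠ v := fun e => hvX (e ▸ haX)
          have hnay2 : a ≠ y2 := fun e => hXY' haX (e ▸ hy2Y)
          have hnab2 : a ≠ b2 := fun e => hXY' haX (e ▸ hb2Y)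
          obtain ⟨hx1', hx2'⟩ := XDIFF {a, v, y2, b2} {a}
            (by rintro u rfl; exact haX)
            (by
              intro u hu
              simp only [Set.mem_insert_iff, Set.mem_singleton_iff]
              constructor
              · rintro (rfl | rfl | rfl | rfl)
                · rfl
                · exact absurd hu hvX
                · exact absurd (hXY' hu) (fun hf => hf hy2Y)
                · exact absurd (hXY' hu) (fun hf => hf hb2Y)
              · intro hh; left; exact hh)
          obtain ⟨hy1', hy2''⟩ := YDIFF {a, v, y2, b2} {y2, b2}
            (by rintro u (rfl | rfl); exacts [hy2Y, hb2Y])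
            (by
              intro u hu
              simp only [Set.mem_insert_iff, Set.mem_singleton_iff]
              constructor
              · rintro (rfl | rfl | hh)
                · exact absurd hu (hXY' haX)
                · exact absurd hu hvY
                · exact hh
              · intro hh; right; right; exact hh)
          rw [Set.ncard_singleton] at hx1' hx2'
          rw [Set.ncard_pair hny2b2] at hy1' hy2''
          refine LEAF a b2 (Walk.cons (haN : G.Adj v a).symm (Walk.cons hvy2
            (Walk.cons hy2b2 Walk.nil))) {a, v, y2, b2} ?_ haA hb2B ?_ (by simp) ?_ ?_
          · rw [Walk.isPath_def]; simp [hnav, hnay2, hnab2, hnvy2, hnvb2, hny2b2]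
          · intro u; simp [Walk.support_cons]
          · left; rw [hx1', hy1']; omega
          · left; rw [hx1', hy1']; omega
        · by_cases hA2 : ∃ a, a ∈ A ∧ a ∈ X
          · obtain ⟨a, haA, haX⟩ := hA2
            have haN : a ∉ N := fun hh => hA1 ⟨a, haA, haX, hh⟩
            have haB : a ∈ B := hXB haX haN
            by_cases hhN : xh ∈ N
            · -- Leaf L11 : [a, xh, v, y2, b2]
              have hnaxh : a ≠ xh := fun e => haN (e ▸ hhN)
              have haxh : G.Adj a xh := (hful a haX hnaxh).symm
              have hnav : a ≠ v := fun e => hvX (e ▸ haX)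
              have hnay2 : a ≠ y2 := fun e => hXY' haX (e ▸ hy2Y)
              have hnab2 : a ≠ b2 := fun e => hXY' haX (e ▸ hb2Y)
              have hnxhv : xh ≠ v := fun e => hvX (e ▸ hhX)
              have hnxhy2 : xh ≠ y2 := fun e => hXY' hhX (e ▸ hy2Y)
              have hnxhb2 : xh ≠ b2 := fun e => hXY' hhX (e ▸ hb2Y)
              obtain ⟨hx1', hx2'⟩ := XDIFF {a, xh, v, y2, b2} {a, xh}
                (by rintro u (rfl | rfl); exacts [haX, hhX])
                (by
                  intro u hu
                  simp only [Set.mem_insert_iff, Set.mem_singleton_iff]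
                  constructor
                  · rintro (rfl | rfl | rfl | rfl | rfl)
                    · left; rfl
                    · right; rfl
                    · exact absurd hu hvX
                    · exact absurd hy2Y (hXY' hu)
                    · exact absurd hb2Y (hXY' hu)
                  · rintro (rfl | rfl)
                    · left; rfl
                    · right; left; rfl)
              obtain ⟨hy1', hy2''⟩ := YDIFF {a, xh, v, y2, b2} {y2, b2}
                (by rintro u (rfl | rfl); exacts [hy2Y, hb2Y])
                (by
                  intro u hu
                  simp only [Set.mem_insert_iff, Set.mem_singleton_iff]
                  constructor
                  · rintro (rfl | rfl | rfl | hh)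
                    · exact absurd hu (hXY' haX)
                    · exact absurd hu (hXY' hhX)
                    · exact absurd hu hvY
                    · exact hh
                  · intro hh; right; right; right; exact hh)
              rw [Set.ncard_pair hnaxh] at hx1' hx2'
              rw [Set.ncard_pair hny2b2] at hy1' hy2''
              refine LEAF a b2 (Walk.cons haxh (Walk.cons (hhN : G.Adj v xh).symm
                (Walk.cons hvy2 (Walk.cons hy2b2 Walk.nil)))) {a, xh, v, y2, b2} ?_
                haA hb2B ?_ (by simp) ?_ ?_
              · rw [Walk.isPath_def]
                simp [hnaxh, hnav, hnay2, hnab2, hnxhv, hnxhy2, hnxhb2, hnvy2, hnvb2, hny2b2]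
              · intro u; simp [Walk.support_cons]
              · left; rw [hx1', hy1']; omega
              · left; rw [hx1', hy1']; omega
            · -- xh ∉ N, so xh ∈ B
              have hhB : xh ∈ B := hXB hhX hhN
              have hnx1xh : x1 ≠ xh := fun e => hhN (e ▸ hx1N)
              have hxhx1 : G.Adj xh x1 := hful x1 hx1X hnx1xh
              have hnx1v : x1 ≠ v := fun e => hvX (e ▸ hx1X)
              have hnx1y2 : x1 ≠ y2 := fun e => hXY' hx1X (e ▸ hy2Y)
              have hnx1b2 : x1 ≠ b2 := fun e => hXY' hx1X (e ▸ hb2Y)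
              have hnxhv : xh ≠ v := fun e => hvX (e ▸ hhX)
              have hnxhy2 : xh ≠ y2 := fun e => hXY' hhX (e ▸ hy2Y)
              have hnxhb2 : xh ≠ b2 := fun e => hXY' hhX (e ▸ hb2Y)
              have hnxhx1 : xh ≠ x1 := Ne.symm hnx1xh
              by_cases hax : a = xh
              · -- Leaf L11' : [xh, x1, v, y2, b2]
                have hxhA : xh ∈ A := hax ▸ haA
                obtain ⟨hx1', hx2'⟩ := XDIFF {xh, x1, v, y2, b2} {xh, x1}
                  (by rintro u (rfl | rfl); exacts [hhX, hx1X])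
                  (by
                    intro u hu
                    simp only [Set.mem_insert_iff, Set.mem_singleton_iff]
                    constructor
                    · rintro (rfl | rfl | rfl | rfl | rfl)
                      · left; rfl
                      · right; rfl
                      · exact absurd hu hvX
                      · exact absurd hy2Y (hXY' hu)
                      · exact absurd hb2Y (hXY' hu)
                    · rintro (rfl | rfl)
                      · left; rfl
                      · right; left; rfl)
                obtain ⟨hy1', hy2''⟩ := YDIFF {xh, x1, v, y2, b2} {y2, b2}
                  (by rintro u (rfl | rfl); exacts [hy2Y, hb2Y])
                  (by
                    intro u hu
                    simp only [Set.mem_insert_iff, Set.mem_singleton_iff]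
                    constructor
                    · rintro (rfl | rfl | rfl | hh)
                      · exact absurd hu (hXY' hhX)
                      · exact absurd hu (hXY' hx1X)
                      · exact absurd hu hvY
                      · exact hh
                    · intro hh; right; right; right; exact hh)
                rw [Set.ncard_pair hnxhx1] at hx1' hx2'
                rw [Set.ncard_pair hny2b2] at hy1' hy2''
                refine LEAF xh b2 (Walk.cons hxhx1 (Walk.cons (hx1N : G.Adj v x1).symm
                  (Walk.cons hvy2 (Walk.cons hy2b2 Walk.nil)))) {xh, x1, v, y2, b2} ?_
                  hxhA hb2B ?_ (by simp) ?_ ?_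
                · rw [Walk.isPath_def]
                  simp [hnxhx1, hnxhv, hnxhy2, hnxhb2, hnx1v, hnx1y2, hnx1b2, hnvy2, hnvb2,
                    hny2b2]
                · intro u; simp [Walk.support_cons]
                · left; rw [hx1', hy1']; omega
                · left; rw [hx1', hy1']; omega
              · -- Leaf L12 : [a, xh, x1, v, y2, b2]
                have haxh : G.Adj a xh := (hful a haX hax).symm
                have hnav : a ≠ v := fun e => hvX (e ▸ haX)
                have hnay2 : a ≠ y2 := fun e => hXY' haX (e ▸ hy2Y)
                have hnab2 : a ≠ b2 := fun e => hXY' haX (e ▸ hb2Y)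
                have hnax1 : a ≠ x1 := fun e => haN (e ▸ hx1N)
                have hF3 : ({a, xh, x1} : Set V).ncard = 3 := NC3 a xh x1 hax hnax1 hnxhx1
                obtain ⟨hx1', hx2'⟩ := XDIFF {a, xh, x1, v, y2, b2} {a, xh, x1}
                  (by rintro u (rfl | rfl | rfl); exacts [haX, hhX, hx1X])
                  (by
                    intro u hu
                    simp only [Set.mem_insert_iff, Set.mem_singleton_iff]
                    constructor
                    · rintro (rfl | rfl | rfl | rfl | rfl | rfl)
                      · left; rfl
                      · right; left; rfl
                      · right; right; rfl
                      · exact absurd hu hvX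
                      · exact absurd hy2Y (hXY' hu)
                      · exact absurd hb2Y (hXY' hu)
                    · rintro (rfl | rfl | rfl)
                      · left; rfl
                      · right; left; rfl
                      · right; right; left; rfl)
                obtain ⟨hy1', hy2''⟩ := YDIFF {a, xh, x1, v, y2, b2} {y2, b2}
                  (by rintro u (rfl | rfl); exacts [hy2Y, hb2Y])
                  (by
                    intro u hu
                    simp only [Set.mem_insert_iff, Set.mem_singleton_iff]
                    constructor
                    · rintro (rfl | rfl | rfl | rfl | hh)
                      · exact absurd hu (hXY' haX)
                      · exact absurd hu (hXY' hhX)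
                      · exact absurd hu (hXY' hx1X)
                      · exact absurd hu hvY
                      · exact hh
                    · intro hh; right; right; right; right; exact hh)
                rw [hF3] at hx1' hx2'
                rw [Set.ncard_pair hny2b2] at hy1' hy2''
                refine LEAF a b2 (Walk.cons haxh (Walk.cons hxhx1
                  (Walk.cons (hx1N : G.Adj v x1).symm (Walk.cons hvy2
                  (Walk.cons hy2b2 Walk.nil))))) {a, xh, x1, v, y2, b2} ?_
                  haA hb2B ?_ (by simp) ?_ ?_
                · rw [Walk.isPath_def]
                  simp [hax, hnax1, hnav, hnay2, hnab2, hnxhx1, hnxhv, hnxhy2, hnxhb2,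
                    hnx1v, hnx1y2, hnx1b2, hnvy2, hnvb2, hny2b2]
                · intro u; simp [Walk.support_cons]
                · left; rw [hx1', hy1']; omega
                · left; rw [hx1', hy1']; omega
          · -- A ∩ X = ∅
            obtain ⟨bx, hbxX, hbxN⟩ := hBxNE
            have hbxB : bx ∈ B := hXB hbxX hbxN
            have hxb : ∃ xs bs : V, xs ∈ X ∧ xs ∈ N ∧ bs ∈ X ∧ bs ∈ B ∧ bs ∉ N ∧
                G.Adj xs bs := by
              by_cases hhN : xh ∈ N
              · exact ⟨xh, bx, hhX, hhN, hbxX, hbxB, hbxN,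
                  hful bx hbxX (fun e => hbxN (e ▸ hhN))⟩
              · exact ⟨x1, xh, hx1X, hx1N, hhX, hXB hhX hhN, hhN,
                  (hful x1 hx1X (fun e => hhN (e ▸ hx1N))).symm⟩
            obtain ⟨xs, bs, hxsX, hxsN, hbsX, hbsB, hbsN, hxsbs⟩ := hxb
            have hnxsbs : xs ≠ bs := fun e => hbsN (e ▸ hxsN)
            have hnvxs : v ≠ xs := fun e => hvX (e ▸ hxsX)
            have hnvbs : v ≠ bs := fun e => hvX (e ▸ hbsX)
            by_cases hA3 : ∃ a, a ∈ A ∧ a ∈ Y ∧ a ∈ N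
            · -- Leaf L13 : [a, v, xs, bs]
              obtain ⟨a, haA, haY, haN⟩ := hA3
              have hnav : a ≠ v := fun e => hvY (e ▸ haY)
              have hnaxs : a ≠ xs := fun e => hXY' hxsX (e ▸ haY)
              have hnabs : a ≠ bs := fun e => hXY' hbsX (e ▸ haY)
              obtain ⟨hx1', hx2'⟩ := XDIFF {a, v, xs, bs} {xs, bs}
                (by rintro u (rfl | rfl); exacts [hxsX, hbsX])
                (by
                  intro u hu
                  simp only [Set.mem_insert_iff, Set.mem_singleton_iff]
                  constructor
                  · rintro (rfl | rfl | hh)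
                    · exact absurd hu (fun hf => hXY' hf haY)
                    · exact absurd hu hvX
                    · exact hh
                  · intro hh; right; right; exact hh)
              obtain ⟨hy1', hy2''⟩ := YDIFF {a, v, xs, bs} {a}
                (by rintro u rfl; exact haY)
                (by
                  intro u hu
                  simp only [Set.mem_insert_iff, Set.mem_singleton_iff]
                  constructor
                  · rintro (rfl | rfl | rfl | rfl)
                    · rfl
                    · exact absurd hu hvY
                    · exact absurd hu (hXY' hxsX)
                    · exact absurd hu (hXY' hbsX)
                  · intro hh; left; exact hh)
              rw [Set.ncard_pair hnxsbs] at hx1' hx2'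
              rw [Set.ncard_singleton] at hy1' hy2''
              refine LEAF a bs (Walk.cons (haN : G.Adj v a).symm (Walk.cons hxsN
                (Walk.cons hxsbs Walk.nil))) {a, v, xs, bs} ?_ haA hbsB ?_ (by simp) ?_ ?_
              · rw [Walk.isPath_def]; simp [hnav, hnaxs, hnabs, hnvxs, hnvbs, hnxsbs]
              · intro u; simp [Walk.support_cons]
              · left; rw [hx1', hy1']; omega
              · left; rw [hx1', hy1']; omega
            · -- Leaf L14 : [b2, y2, v, xs, bs]
              have hsubA : A ⊆ insert v (Y \ N) := by
                intro a ha
                by_cases he : a = v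
                · rw [he]; exact Set.mem_insert _ _
                · rcases hmemV a he with h' | h'
                  · exact absurd ⟨a, ha, h'⟩ hA2
                  · exact Set.mem_insert_of_mem _ ⟨h', fun hn => hA3 ⟨a, ha, h', hn⟩⟩
              have hYN : (Y \ N).ncard = Y.ncard - (Y ∩ N).ncard := by
                rw [← Set.diff_self_inter, Set.ncard_diff Set.inter_subset_left]
              have hvYN : v ∉ Y \ N := fun hh => hvY hh.1
              have hins : (insert v (Y \ N)).ncard = (Y \ N).ncard + 1 :=
                Set.ncard_insert_of_notMem hvYN (Set.toFinite _)
              have hAle := Set.ncard_le_ncard hsubA (Set.toFinite _)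
              have hnyle : (Y ∩ N).ncard ≤ Y.ncard :=
                Set.ncard_le_ncard Set.inter_subset_left (Set.toFinite _)
              have hAeq : A = insert v (Y \ N) :=
                Set.eq_of_subset_of_ncard_le hsubA (by omega) (Set.toFinite _)
              have hb2A : b2 ∈ A := by
                rw [hAeq]; exact Set.mem_insert_of_mem _ ⟨hb2Y, hb2N⟩
              have hnb2y2 : b2 ≠ y2 := Ne.symm hny2b2
              have hnb2v : b2 ≠ v := Ne.symm hnvb2
              have hnb2xs : b2 ≠ xs := fun e => hXY' hxsX (e ▸ hb2Y)
              have hnb2bs : b2 ≠ bs := fun e => hXY' hbsX (e ▸ hb2Y)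
              have hny2v : y2 ≠ v := Ne.symm hnvy2
              have hny2xs : y2 ≠ xs := fun e => hXY' hxsX (e ▸ hy2Y)
              have hny2bs : y2 ≠ bs := fun e => hXY' hbsX (e ▸ hy2Y)
              obtain ⟨hx1', hx2'⟩ := XDIFF {b2, y2, v, xs, bs} {xs, bs}
                (by rintro u (rfl | rfl); exacts [hxsX, hbsX])
                (by
                  intro u hu
                  simp only [Set.mem_insert_iff, Set.mem_singleton_iff]
                  constructor
                  · rintro (rfl | rfl | rfl | hh)
                    · exact absurd hb2Y (hXY' hu)
                    · exact absurd hy2Y (hXY' hu)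
                    · exact absurd hu hvX
                    · exact hh
                  · intro hh; right; right; right; exact hh)
              obtain ⟨hy1', hy2''⟩ := YDIFF {b2, y2, v, xs, bs} {b2, y2}
                (by rintro u (rfl | rfl); exacts [hb2Y, hy2Y])
                (by
                  intro u hu
                  simp only [Set.mem_insert_iff, Set.mem_singleton_iff]
                  constructor
                  · rintro (rfl | rfl | rfl | rfl | rfl)
                    · left; rfl
                    · right; rfl
                    · exact absurd hu hvY
                    · exact absurd hu (hXY' hxsX)
                    · exact absurd hu (hXY' hbsX)
                  · rintro (rfl | rfl)
                    · left; rfl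
                    · right; left; rfl)
              rw [Set.ncard_pair hnxsbs] at hx1' hx2'
              rw [Set.ncard_pair hnb2y2] at hy1' hy2''
              refine LEAF b2 bs (Walk.cons hy2b2.symm (Walk.cons hvy2.symm
                (Walk.cons hxsN (Walk.cons hxsbs Walk.nil)))) {b2, y2, v, xs, bs} ?_
                hb2A hbsB ?_ (by simp) ?_ ?_
              · rw [Walk.isPath_def]
                simp [hnb2y2, hnb2v, hnb2xs, hnb2bs, hny2v, hny2xs, hny2bs, hnvxs, hnvbs,
                  hnxsbs]
              · intro u; simp [Walk.support_cons]
              · left; rw [hx1', hy1']; omega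
              · left; rw [hx1', hy1']; omega
  -- ================= CASE 4 : some b ∈ B ∩ X adjacent to v =================
  by_cases h4 : ∃ b, b ∈ B ∧ b ∈ X ∧ G.Adj v b
  · obtain ⟨b1, hb1B, hb1X, hvb1⟩ := h4
    have hb1N : b1 ∈ N := hvb1
    have hnvb1 : v ≠ b1 := fun e => hvX (e ▸ hb1X)
    obtain ⟨hx41, hx42⟩ := XDIFF {v, b1} {b1}
      (by rintro u rfl; exact hb1X)
      (by
        intro u hu
        simp only [Set.mem_insert_iff, Set.mem_singleton_iff]
        constructor
        · rintro (rfl | hh)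
          · exact absurd hu hvX
          · exact hh
        · intro hh; right; exact hh)
    obtain ⟨hy41, hy42⟩ := YDIFF {v, b1} ∅ (Set.empty_subset Y) (by
      intro u hu
      simp only [Set.mem_insert_iff, Set.mem_singleton_iff, Set.mem_empty_iff_false, iff_false]
      rintro (rfl | rfl)
      · exact hvY hu
      · exact hXY' hb1X hu)
    rw [Set.ncard_singleton] at hx41 hx42
    rw [Set.ncard_empty] at hy41
    by_cases NHY : ∀ g ∈ Y, (∃ y ∈ Y, y ≠ g) → ∃ y ∈ Y, y ≠ g ∧ ¬G.Adj g y
    · -- Leaf L4' : [v, b1], no Y-hub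
      refine LEAF v b1 (Walk.cons hvb1 Walk.nil) {v, b1} ?_ hvA hb1B ?_ (by simp) ?_ ?_
      · rw [Walk.isPath_def]; simp [hnvb1]
      · intro u; simp [Walk.support_cons]
      · left; rw [hx41, hy41]; omega
      · exact Or.inr ⟨NHY, by rw [hx41, hy41]; omega⟩
    · push_neg at NHY
      obtain ⟨g, hgY, ⟨yy0, hyy0Y, hyy0g⟩, gful⟩ := NHY
      by_cases hts : Y.ncard = X.ncard
      · -- Leaf L4 : [v, b1]  (n odd, crude on both sides)
        refine LEAF v b1 (Walk.cons hvb1 Walk.nil) {v, b1} ?_ hvA hb1B ?_ (by simp) ?_ ?_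
        · rw [Walk.isPath_def]; simp [hnvb1]
        · intro u; simp [Walk.support_cons]
        · left; rw [hx41, hy41]; omega
        · left; rw [hx41, hy41]; omega
      · have hts1 : Y.ncard = X.ncard + 1 := by omega
        have hByNE : ∃ b, b ∈ B ∧ b ∈ Y := by
          by_contra hno
          push_neg at hno
          have hsubB : B ⊆ X := by
            intro b hb
            have hbv : b ≠ v := fun e => hvB (e ▸ hb)
            rcases hmemV b hbv with h' | h'
            · exact h'
            · exact absurd h' (hno b hb)
          have := Set.ncard_le_ncard hsubB (Set.toFinite _)
          omega
        obtain ⟨yb, hybB, hybY⟩ := hByNE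
        have hybN : yb ∉ N := fun hh => h2 ⟨yb, hybB, hybY, hh⟩
        have hgB : g ∉ B := by
          intro hgB
          obtain ⟨y0, hy0Y, hy0N⟩ := hNyNE
          by_cases he : y0 = g
          · exact h2 ⟨g, hgB, hgY, he ▸ hy0N⟩
          · exact h3 ⟨y0, hy0Y, hy0N, g, hgB, hgY, (gful y0 hy0Y he).symm⟩
        have hgN : g ∉ N := by
          intro hgN
          have hbyg : yb ≠ g := fun e => hgB (e ▸ hybB)
          exact h3 ⟨g, hgY, hgN, yb, hybB, hybY, gful yb hybY hbyg⟩
        obtain ⟨y0, hy0Y, hy0N⟩ := hNyNE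
        have hny0g : y0 ≠ g := fun e => hgN (e ▸ hy0N)
        by_cases hA3 : ∃ a, a ∈ A ∧ a ∈ Y ∧ a ∈ N
        · -- Leaf L6 : [a, v, b1]
          obtain ⟨a, haA, haY, haN⟩ := hA3
          have hnav : a ≠ v := fun e => hvY (e ▸ haY)
          have hnab1 : a ≠ b1 := fun e => hXY' hb1X (e ▸ haY)
          obtain ⟨hx1', hx2'⟩ := XDIFF {a, v, b1} {b1}
            (by rintro u rfl; exact hb1X)
            (by
              intro u hu
              simp only [Set.mem_insert_iff, Set.mem_singleton_iff]
              constructor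
              · rintro (rfl | rfl | hh)
                · exact absurd hu (fun hf => hXY' hf haY)
                · exact absurd hu hvX
                · exact hh
              · intro hh; right; right; exact hh)
          obtain ⟨hy1', hy2''⟩ := YDIFF {a, v, b1} {a}
            (by rintro u rfl; exact haY)
            (by
              intro u hu
              simp only [Set.mem_insert_iff, Set.mem_singleton_iff]
              constructor
              · rintro (rfl | rfl | rfl)
                · rfl
                · exact absurd hu hvY
                · exact absurd hu (hXY' hb1X)
              · intro hh; left; exact hh)
          rw [Set.ncard_singleton] at hx1' hx2'
          rw [Set.ncard_singleton] at hy1' hy2''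
          refine LEAF a b1 (Walk.cons (haN : G.Adj v a).symm (Walk.cons hvb1 Walk.nil))
            {a, v, b1} ?_ haA hb1B ?_ (by simp) ?_ ?_
          · rw [Walk.isPath_def]; simp [hnav, hnab1, hnvb1]
          · intro u; simp [Walk.support_cons]
          · left; rw [hx1', hy1']; omega
          · left; rw [hx1', hy1']; omega
        · by_cases hA4 : ∃ a, a ∈ A ∧ a ∈ Y
          · obtain ⟨a, haA, haY⟩ := hA4
            have haN : a ∉ N := fun hh => hA3 ⟨a, haA, haY, hh⟩
            have hngy0 : g ≠ y0 := Ne.symm hny0g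
            have hny0v : y0 ≠ v := fun e => hvY (e ▸ hy0Y)
            have hny0b1 : y0 ≠ b1 := fun e => hXY' hb1X (e ▸ hy0Y)
            have hngv : g ≠ v := fun e => hvY (e ▸ hgY)
            have hngb1 : g ≠ b1 := fun e => hXY' hb1X (e ▸ hgY)
            have hgy0 : G.Adj g y0 := gful y0 hy0Y hny0g
            by_cases hag : a = g
            · -- Leaf L7' : [g, y0, v, b1]
              have hgA : g ∈ A := hag ▸ haA
              obtain ⟨hx1', hx2'⟩ := XDIFF {g, y0, v, b1} {b1}
                (by rintro u rfl; exact hb1X)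
                (by
                  intro u hu
                  simp only [Set.mem_insert_iff, Set.mem_singleton_iff]
                  constructor
                  · rintro (rfl | rfl | rfl | hh)
                    · exact absurd hgY (hXY' hu)
                    · exact absurd hy0Y (hXY' hu)
                    · exact absurd hu hvX
                    · exact hh
                  · intro hh; right; right; right; exact hh)
              obtain ⟨hy1', hy2''⟩ := YDIFF {g, y0, v, b1} {g, y0}
                (by rintro u (rfl | rfl); exacts [hgY, hy0Y])
                (by
                  intro u hu
                  simp only [Set.mem_insert_iff, Set.mem_singleton_iff]
                  constructor
                  · rintro (rfl | rfl | rfl | rfl)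
                    · left; rfl
                    · right; rfl
                    · exact absurd hu hvY
                    · exact absurd hu (hXY' hb1X)
                  · rintro (rfl | rfl)
                    · left; rfl
                    · right; left; rfl)
              rw [Set.ncard_singleton] at hx1' hx2'
              rw [Set.ncard_pair hngy0] at hy1' hy2''
              refine LEAF g b1 (Walk.cons hgy0 (Walk.cons (hy0N : G.Adj v y0).symm
                (Walk.cons hvb1 Walk.nil))) {g, y0, v, b1} ?_ hgA hb1B ?_ (by simp) ?_ ?_
              · rw [Walk.isPath_def]; simp [hngy0, hngv, hngb1, hny0v, hny0b1, hnvb1]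
              · intro u; simp [Walk.support_cons]
              · left; rw [hx1', hy1']; omega
              · left; rw [hx1', hy1']; omega
            · -- Leaf L7 : [a, g, y0, v, b1]
              have hag' : G.Adj a g := (gful a haY hag).symm
              have hnav : a ≠ v := fun e => hvY (e ▸ haY)
              have hnab1 : a ≠ b1 := fun e => hXY' hb1X (e ▸ haY)
              have hnay0 : a ≠ y0 := fun e => haN (e ▸ hy0N)
              have hF3 : ({a, g, y0} : Set V).ncard = 3 := NC3 a g y0 hag hnay0 hngy0
              obtain ⟨hx1', hx2'⟩ := XDIFF {a, g, y0, v, b1} {b1}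
                (by rintro u rfl; exact hb1X)
                (by
                  intro u hu
                  simp only [Set.mem_insert_iff, Set.mem_singleton_iff]
                  constructor
                  · rintro (rfl | rfl | rfl | rfl | hh)
                    · exact absurd haY (hXY' hu)
                    · exact absurd hgY (hXY' hu)
                    · exact absurd hy0Y (hXY' hu)
                    · exact absurd hu hvX
                    · exact hh
                  · intro hh; right; right; right; right; exact hh)
              obtain ⟨hy1', hy2''⟩ := YDIFF {a, g, y0, v, b1} {a, g, y0}
                (by rintro u (rfl | rfl | rfl); exacts [haY, hgY, hy0Y])
                (by
                  intro u hu
                  simp only [Set.mem_insert_iff, Set.mem_singleton_iff]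
                  constructor
                  · rintro (rfl | rfl | rfl | rfl | rfl)
                    · left; rfl
                    · right; left; rfl
                    · right; right; rfl
                    · exact absurd hu hvY
                    · exact absurd hu (hXY' hb1X)
                  · rintro (rfl | rfl | rfl)
                    · left; rfl
                    · right; left; rfl
                    · right; right; left; rfl)
              rw [Set.ncard_singleton] at hx1' hx2'
              rw [hF3] at hy1' hy2''
              refine LEAF a b1 (Walk.cons hag' (Walk.cons hgy0
                (Walk.cons (hy0N : G.Adj v y0).symm (Walk.cons hvb1 Walk.nil))))
                {a, g, y0, v, b1} ?_ haA hb1B ?_ (by simp) ?_ ?_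
              · rw [Walk.isPath_def]
                simp [hag, hnay0, hnav, hnab1, hngy0, hngv, hngb1, hny0v, hny0b1, hnvb1]
              · intro u; simp [Walk.support_cons]
              · left; rw [hx1', hy1']; omega
              · left; rw [hx1', hy1']; omega
          · -- A = insert v X
            have hsubA : A ⊆ insert v X := by
              intro a ha
              by_cases he : a = v
              · rw [he]; exact Set.mem_insert _ _
              · rcases hmemV a he with h' | h'
                · exact Set.mem_insert_of_mem _ h'
                · exact absurd ⟨a, ha, h'⟩ hA4
            have hins : (insert v X).ncard = X.ncard + 1 :=
              Set.ncard_insert_of_notMem hvX (Set.toFinite _)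
            have hAle := Set.ncard_le_ncard hsubA (Set.toFinite _)
            have hAeq : A = insert v X :=
              Set.eq_of_subset_of_ncard_le hsubA (by omega) (Set.toFinite _)
            have hXsubA : ∀ {x : V}, x ∈ X → x ∈ A := by
              intro x hx
              rw [hAeq]; exact Set.mem_insert_of_mem _ hx
            have hnbyg : yb ≠ g := fun e => hgB (e ▸ hybB)
            have hgyb : G.Adj g yb := gful yb hybY hnbyg
            have hny0yb : y0 ≠ yb := fun e => hybN (e ▸ hy0N)
            have hngyb : g ≠ yb := Ne.symm hnbyg
            have hngy0 : g ≠ y0 := Ne.symm hny0g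
            have hny0v : y0 ≠ v := fun e => hvY (e ▸ hy0Y)
            have hngv : g ≠ v := fun e => hvY (e ▸ hgY)
            have hnvyb : v ≠ yb := fun e => hvY (e ▸ hybY)
            have hy0g' : G.Adj y0 g := (gful y0 hy0Y hny0g).symm
            have hFy3 : ({y0, g, yb} : Set V).ncard = 3 := NC3 y0 g yb hny0g hny0yb hngyb
            by_cases NHX : ∀ h ∈ X, (∃ x ∈ X, x ≠ h) → ∃ x ∈ X, x ≠ h ∧ ¬G.Adj h x
            · -- Leaf L8 : [v, y0, g, yb]
              obtain ⟨hx1', hx2'⟩ := XDIFF {v, y0, g, yb} ∅ (Set.empty_subset X) (by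
                intro u hu
                simp only [Set.mem_insert_iff, Set.mem_singleton_iff,
                  Set.mem_empty_iff_false, iff_false]
                rintro (rfl | rfl | rfl | rfl)
                · exact hvX hu
                · exact hXY' hu hy0Y
                · exact hXY' hu hgY
                · exact hXY' hu hybY)
              obtain ⟨hy1', hy2''⟩ := YDIFF {v, y0, g, yb} {y0, g, yb}
                (by rintro u (rfl | rfl | rfl); exacts [hy0Y, hgY, hybY])
                (by
                  intro u hu
                  simp only [Set.mem_insert_iff, Set.mem_singleton_iff]
                  constructor
                  · rintro (rfl | hh)
                    · exact absurd hu hvY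
                    · exact hh
                  · intro hh; right; exact hh)
              rw [Set.ncard_empty] at hx1'
              rw [hFy3] at hy1' hy2''
              refine LEAF v yb (Walk.cons (hy0N : G.Adj v y0) (Walk.cons hy0g'
                (Walk.cons hgyb Walk.nil))) {v, y0, g, yb} ?_ hvA hybB ?_ (by simp) ?_ ?_
              · rw [Walk.isPath_def]
                simp [Ne.symm hny0v, Ne.symm hngv, hnvyb, hny0g, hny0yb, hngyb]
              · intro u; simp [Walk.support_cons]
              · exact Or.inr ⟨NHX, by rw [hx1', hy1']; omega⟩
              · left; rw [hx1', hy1']; omega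
            · push_neg at NHX
              obtain ⟨xh, hhX, ⟨x0, hx0X, hx0xh⟩, hful⟩ := NHX
              have hnxhv : xh ≠ v := fun e => hvX (e ▸ hhX)
              have hnxhy0 : xh ≠ y0 := fun e => hXY' hhX (e ▸ hy0Y)
              have hnxhg : xh ≠ g := fun e => hXY' hhX (e ▸ hgY)
              have hnxhyb : xh ≠ yb := fun e => hXY' hhX (e ▸ hybY)
              by_cases hhN : xh ∈ N
              · -- Leaf L9 : [x0, xh, v, y0, g, yb]
                have hx0A : x0 ∈ A := hXsubA hx0X
                have hx0xh' : G.Adj x0 xh := (hful x0 hx0X hx0xh).symm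
                have hnx0v : x0 ≠ v := fun e => hvX (e ▸ hx0X)
                have hnx0y0 : x0 ≠ y0 := fun e => hXY' hx0X (e ▸ hy0Y)
                have hnx0g : x0 ≠ g := fun e => hXY' hx0X (e ▸ hgY)
                have hnx0yb : x0 ≠ yb := fun e => hXY' hx0X (e ▸ hybY)
                obtain ⟨hx1', hx2'⟩ := XDIFF {x0, xh, v, y0, g, yb} {x0, xh}
                  (by rintro u (rfl | rfl); exacts [hx0X, hhX])
                  (by
                    intro u hu
                    simp only [Set.mem_insert_iff, Set.mem_singleton_iff]
                    constructor
                    · rintro (rfl | rfl | rfl | rfl | rfl | rfl)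
                      · left; rfl
                      · right; rfl
                      · exact absurd hu hvX
                      · exact absurd hy0Y (hXY' hu)
                      · exact absurd hgY (hXY' hu)
                      · exact absurd hybY (hXY' hu)
                    · rintro (rfl | rfl)
                      · left; rfl
                      · right; left; rfl)
                obtain ⟨hy1', hy2''⟩ := YDIFF {x0, xh, v, y0, g, yb} {y0, g, yb}
                  (by rintro u (rfl | rfl | rfl); exacts [hy0Y, hgY, hybY])
                  (by
                    intro u hu
                    simp only [Set.mem_insert_iff, Set.mem_singleton_iff]
                    constructor
                    · rintro (rfl | rfl | rfl | hh)
                      · exact absurd hu (hXY' hx0X)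
                      · exact absurd hu (hXY' hhX)
                      · exact absurd hu hvY
                      · exact hh
                    · intro hh; right; right; right; exact hh)
                rw [Set.ncard_pair hx0xh] at hx1' hx2'
                rw [hFy3] at hy1' hy2''
                refine LEAF x0 yb (Walk.cons hx0xh' (Walk.cons (hhN : G.Adj v xh).symm
                  (Walk.cons (hy0N : G.Adj v y0) (Walk.cons hy0g'
                  (Walk.cons hgyb Walk.nil))))) {x0, xh, v, y0, g, yb} ?_
                  hx0A hybB ?_ (by simp) ?_ ?_
                · rw [Walk.isPath_def]
                  simp [hx0xh, hnx0v, hnx0y0, hnx0g, hnx0yb, hnxhv, hnxhy0, hnxhg, hnxhyb,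
                    Ne.symm hny0v, Ne.symm hngv, hnvyb, hny0g, hny0yb, hngyb]
                · intro u; simp [Walk.support_cons]
                · left; rw [hx1', hy1']; omega
                · left; rw [hx1', hy1']; omega
              · -- Leaf L9' : [xh, b1, v, y0, g, yb]
                have hxhA : xh ∈ A := hXsubA hhX
                have hnb1xh : b1 ≠ xh := fun e => hhN (e ▸ hb1N)
                have hxhb1 : G.Adj xh b1 := hful b1 hb1X hnb1xh
                have hnb1v : b1 ≠ v := Ne.symm hnvb1
                have hnb1y0 : b1 ≠ y0 := fun e => hXY' hb1X (e ▸ hy0Y)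
                have hnb1g : b1 ≠ g := fun e => hXY' hb1X (e ▸ hgY)
                have hnb1yb : b1 ≠ yb := fun e => hXY' hb1X (e ▸ hybY)
                have hnxhb1 : xh ≠ b1 := Ne.symm hnb1xh
                obtain ⟨hx1', hx2'⟩ := XDIFF {xh, b1, v, y0, g, yb} {xh, b1}
                  (by rintro u (rfl | rfl); exacts [hhX, hb1X])
                  (by
                    intro u hu
                    simp only [Set.mem_insert_iff, Set.mem_singleton_iff]
                    constructor
                    · rintro (rfl | rfl | rfl | rfl | rfl | rfl)
                      · left; rfl
                      · right; rfl
                      · exact absurd hu hvX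
                      · exact absurd hy0Y (hXY' hu)
                      · exact absurd hgY (hXY' hu)
                      · exact absurd hybY (hXY' hu)
                    · rintro (rfl | rfl)
                      · left; rfl
                      · right; left; rfl)
                obtain ⟨hy1', hy2''⟩ := YDIFF {xh, b1, v, y0, g, yb} {y0, g, yb}
                  (by rintro u (rfl | rfl | rfl); exacts [hy0Y, hgY, hybY])
                  (by
                    intro u hu
                    simp only [Set.mem_insert_iff, Set.mem_singleton_iff]
                    constructor
                    · rintro (rfl | rfl | rfl | hh)
                      · exact absurd hu (hXY' hhX)
                      · exact absurd hu (hXY' hb1X)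
                      · exact absurd hu hvY
                      · exact hh
                    · intro hh; right; right; right; exact hh)
                rw [Set.ncard_pair hnxhb1] at hx1' hx2'
                rw [hFy3] at hy1' hy2''
                refine LEAF xh yb (Walk.cons hxhb1 (Walk.cons hvb1.symm
                  (Walk.cons (hy0N : G.Adj v y0) (Walk.cons hy0g'
                  (Walk.cons hgyb Walk.nil))))) {xh, b1, v, y0, g, yb} ?_
                  hxhA hybB ?_ (by simp) ?_ ?_
                · rw [Walk.isPath_def]
                  simp [hnxhb1, hnxhv, hnxhy0, hnxhg, hnxhyb, hnb1v, hnb1y0, hnb1g, hnb1yb,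
                    Ne.symm hny0v, Ne.symm hngv, hnvyb, hny0g, hny0yb, hngyb]
                · intro u; simp [Walk.support_cons]
                · left; rw [hx1', hy1']; omega
                · left; rw [hx1', hy1']; omega
  -- ================= CASE 5 : B ∩ N[v] = ∅ =================
  · have hBN : ∀ b ∈ B, b ∉ N := by
      intro b hb hbN
      rcases hNXY hbN with hX' | hY'
      · exact h4 ⟨b, hb, hX', hbN⟩
      · exact h2 ⟨b, hb, hY', hbN⟩
    obtain ⟨hBeq, hds⟩ := RIG hvB hBN
    have hXB : ∀ {x : V}, x ∈ X → x ∉ N → x ∈ B := by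
      intro x hx hn
      rw [hBeq]; exact ⟨Or.inl hx, hn⟩
    have hYB : ∀ {y : V}, y ∈ Y → y ∉ N → y ∈ B := by
      intro y hy hn
      rw [hBeq]; exact ⟨Or.inr hy, hn⟩
    have hny1 : 1 ≤ (Y ∩ N).ncard := by
      have := (Set.ncard_pos (Set.toFinite _)).2 hNyNE
      omega
    have hnyleN : (Y ∩ N).ncard ≤ N.ncard :=
      Set.ncard_le_ncard Set.inter_subset_right (Set.toFinite _)
    have hByNE : ∃ y, y ∈ Y ∧ y ∉ N := by
      have hyn : (Y \ N).ncard = Y.ncard - (Y ∩ N).ncard := by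
        rw [← Set.diff_self_inter, Set.ncard_diff Set.inter_subset_left]
      have hpos : 0 < (Y \ N).ncard := by
        rcases (by omega : Y.ncard = X.ncard ∨ Y.ncard = X.ncard + 1) with hts | hts
        · obtain ⟨x1, hx1X, hx1N⟩ := hNxNE hts
          have h1x : 1 ≤ (X ∩ N).ncard := by
            have := (Set.ncard_pos (s := X ∩ N) (Set.toFinite _)).2 ⟨x1, hx1X, hx1N⟩
            omega
          omega
        · omega
      obtain ⟨y, hy⟩ := (Set.ncard_pos (Set.toFinite _)).1 hpos
      exact ⟨y, hy.1, hy.2⟩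
    obtain ⟨yb, hybY, hybN⟩ := hByNE
    have hybB : yb ∈ B := hYB hybY hybN
    have NHY : ∀ g ∈ Y, (∃ y ∈ Y, y ≠ g) → ∃ y ∈ Y, y ≠ g ∧ ¬G.Adj g y := by
      intro g hgY _
      by_contra hno
      push_neg at hno
      by_cases hgN : g ∈ N
      · have hybg : yb ≠ g := Ne.symm (ne_of_mem_of_not_mem hgN hybN)
        exact h3 ⟨g, hgY, hgN, yb, hybB, hybY, hno yb hybY hybg⟩
      · have hgB : g ∈ B := hYB hgY hgN
        obtain ⟨y0, hy0Y, hy0N⟩ := hNyNE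
        have hy0g : y0 ≠ g := fun e => hgN (e ▸ hy0N)
        exact h3 ⟨y0, hy0Y, hy0N, g, hgB, hgY, (hno y0 hy0Y hy0g).symm⟩
    by_cases h51 : ∃ x, x ∈ X ∧ x ∈ N ∧ ∃ b, b ∈ B ∧ b ∈ X ∧ G.Adj x b
    · -- Leaf L5' : [v, x1, bx]
      obtain ⟨x1, hx1X, hx1N, bx, hbxB, hbxX, hx1bx⟩ := h51
      have hbxN : bx ∉ N := hBN bx hbxB
      have hnx1bx : x1 ≠ bx := fun e => hbxN (e ▸ hx1N)
      have hnvx1 : v ≠ x1 := fun e => hvX (e ▸ hx1X)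
      have hnvbx : v ≠ bx := fun e => hvX (e ▸ hbxX)
      obtain ⟨hx1', hx2'⟩ := XDIFF {v, x1, bx} {x1, bx}
        (by rintro u (rfl | rfl); exacts [hx1X, hbxX])
        (by
          intro u hu
          simp only [Set.mem_insert_iff, Set.mem_singleton_iff]
          constructor
          · rintro (rfl | hh)
            · exact absurd hu hvX
            · exact hh
          · intro hh; right; exact hh)
      obtain ⟨hy1', hy2''⟩ := YDIFF {v, x1, bx} ∅ (Set.empty_subset Y) (by
        intro u hu
        simp only [Set.mem_insert_iff, Set.mem_singleton_iff, Set.mem_empty_iff_false,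
          iff_false]
        rintro (rfl | rfl | rfl)
        · exact hvY hu
        · exact hXY' hx1X hu
        · exact hXY' hbxX hu)
      rw [Set.ncard_pair hnx1bx] at hx1' hx2'
      rw [Set.ncard_empty] at hy1'
      refine LEAF v bx (Walk.cons (hx1N : G.Adj v x1) (Walk.cons hx1bx Walk.nil))
        {v, x1, bx} ?_ hvA hbxB ?_ (by simp) ?_ ?_
      · rw [Walk.isPath_def]; simp [hnvx1, hnvbx, hnx1bx]
      · intro u; simp [Walk.support_cons]
      · left; rw [hx1', hy1']; omega
      · exact Or.inr ⟨NHY, by rw [hx1', hy1']; omega⟩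
    · -- closure contradiction
      exfalso
      apply mkContra (insert v N)
      · intro p hp q hadj
        simp only [Set.mem_insert_iff] at hp ⊢
        rcases hp with rfl | hpN
        · exact Or.inr hadj
        · by_cases hq : q = v
          · exact Or.inl hq
          · right
            by_contra hqN
            rcases hmemV q hq with hqX | hqY
            · have hpX : p ∈ X := by
                rcases hNXY hpN with h' | h'
                · exact h'
                · exact absurd hadj.symm (hadjXY q hqX p h')
              exact h51 ⟨p, hpX, hpN, q, hXB hqX hqN, hqX, hadj⟩
            · have hpY : p ∈ Y := by
                rcases hNXY hpN with h' | h'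
                · exact absurd hadj (hadjXY p h' q hqY)
                · exact h'
              exact h3 ⟨p, hpY, hpN, q, hYB hqY hqN, hqY, hadj⟩
      · rw [Set.ncard_insert_of_notMem hvN]
        omega
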